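/- Let r ≥ 7 and t ≥ 1 with 3 ∤ r, q = r²t. The congruence lattices 𝓛(q; 1, 1+rt, 1+3rt) and 𝓛(q; 1, 1−rt, 1−3rt) are not ‖·‖₁-isometric; equivalently, there is no t' coprime to q, signs ε ∈ {±1}³ and permutation σ such that (1, 1+rt, 1+3rt) ≡ (ε₁t'·s'_{σ(1)}, ε₂t'·s'_{σ(2)}, ε₃t'·s'_{σ(3)}) mod q where (s'₁,s'₂,s'₃) = (1, 1−rt, 1−3rt). -/

import Mathlib

/-- For `r ≥ 7` with `3 ∤ r`, `t ≥ 1` and `q = r²t`, the congruence lattices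
`𝓛(q; 1, 1+rt, 1+3rt)` and `𝓛(q; 1, 1−rt, 1−3rt)` are not `‖·‖₁`-isometric:
there is no unit `t'` mod `q`, signs `ε ∈ {±1}³` and permutation `σ` with
`sⱼ ≡ εⱼ t' s'_{σ(j)} (mod q)` where `s = (1, 1+rt, 1+3rt)` and `s' = (1, 1−rt, 1−3rt)`. -/
theorem congruenceLattices_not_isometric (r t : ℕ) (hr : 7 ≤ r) (h3 : ¬ (3 ∣ r))
    (ht : 1 ≤ t) :
    ¬ ∃ (t' : ℤ) (_ : IsCoprime t' ((r ^ 2 * t : ℕ) : ℤ)) (ε : Fin 3 → ℤ)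
        (_ : ∀ j, ε j = 1 ∨ ε j = -1) (σ : Equiv.Perm (Fin 3)),
      ∀ j, ((r ^ 2 * t : ℕ) : ℤ) ∣
        (![1, 1 + (r : ℤ) * t, 1 + 3 * (r : ℤ) * t] j -
          ε j * t' * (![1, 1 - (r : ℤ) * t, 1 - 3 * (r : ℤ) * t] (σ j))) := by
  rintro ⟨t', hco, ε, hε, σ, h⟩
  have hrpos : (7:ℤ) ≤ (r:ℤ) := by exact_mod_cast hr
  have ht1 : (1:ℤ) ≤ (t:ℤ) := by exact_mod_cast ht
  have hR7 : (7:ℤ) ≤ (r:ℤ) * t := by nlinarith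
  have hRne : (r:ℤ) * t ≠ 0 := by intro h0; rw [h0] at hR7; norm_num at hR7
  have hq : ((r ^ 2 * t : ℕ) : ℤ) = (r:ℤ) * ((r:ℤ) * t) := by push_cast; ring
  -- a small divisibility fact
  have small : ∀ m d : ℤ, 7 ≤ m → m ∣ d → -7 < d → d < 7 → d = 0 := by
    intro m d hm hdvd h1 h2
    by_contra hd0
    have hle := Int.le_of_dvd (abs_pos.mpr hd0) ((dvd_abs _ _).mpr hdvd)
    rcases abs_cases d with ⟨e, _⟩ | ⟨e, _⟩ <;> omega
  have hs : ∀ j, (![1, 1 + (r : ℤ) * t, 1 + 3 * (r : ℤ) * t] j)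
      = 1 + (![0, 1, 3] : Fin 3 → ℤ) j * ((r:ℤ) * t) := by
    intro j; fin_cases j <;> simp <;> ring
  have hs' : ∀ j, (![1, 1 - (r : ℤ) * t, 1 - 3 * (r : ℤ) * t] j)
      = 1 - (![0, 1, 3] : Fin 3 → ℤ) j * ((r:ℤ) * t) := by
    intro j; fin_cases j <;> simp <;> ring
  set v : Fin 3 → ℤ := ![0, 1, 3] with hv
  set R : ℤ := (r:ℤ) * t with hR
  have hRdvd : R ∣ ((r:ℤ) * R) := dvd_mul_left R r
  have hcoR : IsCoprime R t' := (hco.of_isCoprime_of_dvd_right (hq ▸ hRdvd)).symm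
  -- mod R : 1 ≡ ε j * t'
  have key : ∀ j, R ∣ (1 - ε j * t') := by
    intro j
    have hdvd := h j
    rw [hq] at hdvd
    have hd := dvd_trans hRdvd hdvd
    rw [hs j, hs' (σ j)] at hd
    have he : (1 + v j * R) - ε j * t' * (1 - v (σ j) * R)
        = (1 - ε j * t') + R * (v j + ε j * t' * v (σ j)) := by ring
    rw [he] at hd
    exact (dvd_add_right (dvd_mul_right R _)).mp (by rwa [add_comm] at hd)
  -- all signs are equal
  have hεeq : ∀ j k, ε j = ε k := by
    intro j k
    have hd : R ∣ (ε j - ε k) * t' := by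
      have he : (ε j - ε k) * t' = (1 - ε k * t') - (1 - ε j * t') := by ring
      rw [he]; exact dvd_sub (key k) (key j)
    have hd2 : R ∣ (ε j - ε k) := hcoR.dvd_of_dvd_mul_right hd
    have := small R (ε j - ε k) hR7 hd2
    rcases hε j with e1 | e1 <;> rcases hε k with e2 | e2 <;> rw [e1, e2] <;>
      rw [e1, e2] at this <;> omega
  -- write ε 0 * t' = 1 - R * a
  obtain ⟨a, ha⟩ := key 0
  have hεt : ε 0 * t' = 1 - R * a := by linarith [ha]
  -- main congruence mod r
  have main : ∀ j, (r:ℤ) ∣ (v j + v (σ j) + a) := by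
    intro j
    have hdvd := h j
    rw [hq, hs j, hs' (σ j)] at hdvd
    have he : (1 + v j * R) - ε j * t' * (1 - v (σ j) * R)
        = (1 + v j * R) - (ε 0 * t') * (1 - v (σ j) * R) := by rw [hεeq j 0]
    rw [he, hεt] at hdvd
    have he2 : (1 + v j * R) - (1 - R * a) * (1 - v (σ j) * R)
        = R * (v j + v (σ j) + a) - (R * R) * (a * v (σ j)) := by ring
    rw [he2] at hdvd
    have hRR : ((r:ℤ) * R) ∣ (R * R) := ⟨t, by rw [hR]; ring⟩
    have h1 : ((r:ℤ) * R) ∣ R * (v j + v (σ j) + a) := by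
      have := dvd_add hdvd (hRR.mul_right (a * v (σ j)))
      simpa using this
    have h2 : R * (r:ℤ) ∣ R * (v j + v (σ j) + a) := by rwa [mul_comm R (r:ℤ)]
    exact (mul_dvd_mul_iff_left hRne).mp h2
  -- the sums v j + v (σ j) are all equal
  have hvrange : ∀ i : Fin 3, 0 ≤ v i ∧ v i ≤ 3 := by
    intro i; fin_cases i <;> norm_num [hv]
  have heq : ∀ j k : Fin 3, v j + v (σ j) = v k + v (σ k) := by
    intro j k
    have hd : (r:ℤ) ∣ ((v j + v (σ j)) - (v k + v (σ k))) := by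
      have he : (v j + v (σ j)) - (v k + v (σ k))
          = (v j + v (σ j) + a) - (v k + v (σ k) + a) := by ring
      rw [he]; exact dvd_sub (main j) (main k)
    have h1 := hvrange j; have h2 := hvrange k
    have h3 := hvrange (σ j); have h4 := hvrange (σ k)
    have := small (r:ℤ) _ hrpos hd (by omega) (by omega)
    omega
  -- but the three sums total 8, contradiction
  have hsum : ∑ i, v (σ i) = ∑ i, v i := Equiv.sum_comp σ v
  rw [Fin.sum_univ_three, Fin.sum_univ_three] at hsum
  have hc4 : v 0 + v 1 + v 2 = 4 := by norm_num [hv]; rfl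
  have e1 := heq 1 0
  have e2 := heq 2 0
  have hv0 : v 0 = 0 := by norm_num [hv]
  have hv1 : v 1 = 1 := by norm_num [hv]
  have hv2 : v 2 = 3 := by norm_num [hv]; rfl
  omega
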